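/- Every σ-field (K, σ) can be embedded as a σ-subfield into a 1-algebraically closed σ-field; that is, there exists a σ-field (L, σ_L) such that K is a subfield of L, σ_L restricts to σ on K, and every nonconstant skew polynomial in L[T;σ_L] has a right root in L. -/

import Mathlib

open Polynomial

variable {K : Type*} [Field K]

/-- `skewN σ i a = σ^{i-1}(a)⋯σ(a)·a`, with `skewN σ 0 a = 1`. -/
def skewN (σ : K →+* K) : ℕ → K → K
  | 0, _ => 1
  | i + 1, a => σ (skewN σ i a) * a

/-- Right evaluation of a skew polynomial `P = Σ aᵢ Tⁱ` at `a`: `P(a) = Σ aᵢ Nᵢ(a)`. -/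
noncomputable def skewEval (σ : K →+* K) (P : Polynomial K) (a : K) : K :=
  ∑ i ∈ P.support, P.coeff i * skewN σ i a

/-- Multiplication in the skew polynomial ring `K[T;σ]` (with `T·a = σ(a)·T`),
using `Polynomial K` as the carrier of coefficient sequences. -/
noncomputable def skewMul (σ : K →+* K) (P Q : Polynomial K) : Polynomial K :=
  ∑ i ∈ P.support, ∑ j ∈ Q.support,
    Polynomial.C (P.coeff i * (⇑σ)^[i] (Q.coeff j)) * Polynomial.X ^ (i + j)

universe u

/-- A σ-field: a field together with a ring endomorphism. -/
structure SigmaField : Type (u + 1) where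
  carrier : Type u
  [field : Field carrier]
  sigma : carrier →+* carrier

attribute [instance] SigmaField.field

set_option maxHeartbeats 1000000
set_option synthInstance.maxHeartbeats 400000

namespace SkewAux

variable {A B : Type*} [Field A] [Field B]

theorem skewN_map (σA : A →+* A) (σB : B →+* B) (f : A →+* B)
    (h : ∀ x, f (σA x) = σB (f x)) (i : ℕ) (a : A) :
    f (skewN σA i a) = skewN σB i (f a) := by
  induction i with
  | zero => simp [skewN]
  | succ i ih => simp [skewN, map_mul, h, ih]

theorem skewEval_eq_sum_range (σ : A →+* A) (P : Polynomial A) (a : A) :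
    skewEval σ P a = ∑ i ∈ Finset.range (P.natDegree + 1), P.coeff i * skewN σ i a := by
  rw [skewEval]
  refine Finset.sum_subset P.supp_subset_range_natDegree_succ ?_
  intro x _ hx
  rw [Polynomial.notMem_support_iff.mp hx, zero_mul]

theorem skewEval_map (σA : A →+* A) (σB : B →+* B) (f : A →+* B)
    (h : ∀ x, f (σA x) = σB (f x)) (P : Polynomial A) (a : A) :
    skewEval σB (P.map f) (f a) = f (skewEval σA P a) := by
  rw [skewEval_eq_sum_range, skewEval_eq_sum_range, map_sum,
    Polynomial.natDegree_map_eq_of_injective f.injective]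
  refine Finset.sum_congr rfl fun i _ => ?_
  rw [Polynomial.coeff_map, map_mul, skewN_map _ _ _ h]

theorem skewEval_zero (σ : A →+* A) (P : Polynomial A) : skewEval σ P 0 = P.coeff 0 := by
  rw [skewEval_eq_sum_range]
  rw [Finset.sum_eq_single 0]
  · simp [skewN]
  · intro i _ hi
    obtain ⟨j, rfl⟩ := Nat.exists_eq_succ_of_ne_zero hi
    simp [skewN]
  · simp

theorem skewN_div (σ : A →+* A) (b : A) (hb : b ≠ 0) (i : ℕ) :
    skewN σ i (σ b / b) = (⇑σ)^[i] b / b := by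
  induction i with
  | zero => simp [skewN, div_self hb]
  | succ i ih =>
    have hσb : σ b ≠ 0 := fun h => hb (σ.injective (by simp [h]))
    rw [Function.iterate_succ_apply']
    show σ (skewN σ i (σ b / b)) * (σ b / b) = _
    rw [ih, map_div₀]
    field_simp

theorem skewEval_of_linear (σ : A →+* A) (P : Polynomial A) (b : A) (hb : b ≠ 0)
    (h : ∑ i ∈ Finset.range (P.natDegree + 1), P.coeff i * (⇑σ)^[i] b = 0) :
    skewEval σ P (σ b / b) = 0 := by
  rw [skewEval_eq_sum_range]
  have : ∀ i ∈ Finset.range (P.natDegree + 1),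
      P.coeff i * skewN σ i (σ b / b) = P.coeff i * (⇑σ)^[i] b / b := by
    intro i _
    rw [skewN_div σ b hb, mul_div_assoc]
  rw [Finset.sum_congr rfl this, ← Finset.sum_div, h, zero_div]

section Step
variable (L : Type u) [Field L] (σ : L →+* L)

/-- Index type: one block of variables for each polynomial needing a root. -/
abbrev Idx : Type u := {P : Polynomial L // 0 < P.natDegree ∧ P.coeff 0 ≠ 0} × ℕ

abbrev StepRing : Type u := MvPolynomial (Idx L) L

abbrev StepField : Type u := FractionRing (StepRing L)

variable {L}

noncomputable def cf (p : {P : Polynomial L // 0 < P.natDegree ∧ P.coeff 0 ≠ 0}) (i : ℕ) : L :=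
  -(p.1.coeff i / p.1.leadingCoeff)

theorem p_ne_zero (p : {P : Polynomial L // 0 < P.natDegree ∧ P.coeff 0 ≠ 0}) : p.1 ≠ 0 := by
  intro h
  have := p.2.1
  rw [h] at this
  simp at this

theorem lead_ne_zero (p : {P : Polynomial L // 0 < P.natDegree ∧ P.coeff 0 ≠ 0}) :
    p.1.leadingCoeff ≠ 0 :=
  Polynomial.leadingCoeff_ne_zero.mpr (p_ne_zero p)

theorem cf_zero_ne (p : {P : Polynomial L // 0 < P.natDegree ∧ P.coeff 0 ≠ 0}) : cf p 0 ≠ 0 := by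
  simp only [cf, neg_ne_zero, div_ne_zero_iff]
  exact ⟨p.2.2, lead_ne_zero p⟩

variable (L)

/-- The substitution on variables: shift, except solve at the top of each block. -/
noncomputable def fwd : StepRing L →ₐ[L] StepRing L :=
  MvPolynomial.aeval fun q : Idx L =>
    if q.2 + 1 = q.1.1.natDegree then
      ∑ i ∈ Finset.range q.1.1.natDegree, MvPolynomial.C (cf q.1 i) * MvPolynomial.X (q.1, i)
    else MvPolynomial.X (q.1, q.2 + 1)

/-- Left inverse substitution. -/
noncomputable def bwd : StepRing L →ₐ[L] StepRing L :=
  MvPolynomial.aeval fun q : Idx L =>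
    if q.2 = 0 then
      MvPolynomial.C (cf q.1 0)⁻¹ *
        (MvPolynomial.X (q.1, q.1.1.natDegree - 1) -
          ∑ i ∈ Finset.range (q.1.1.natDegree - 1),
            MvPolynomial.C (cf q.1 (i + 1)) * MvPolynomial.X (q.1, i))
    else MvPolynomial.X (q.1, q.2 - 1)

theorem bwd_C (r : L) : bwd L (MvPolynomial.C r) = MvPolynomial.C r := by
  rw [bwd, MvPolynomial.aeval_C, MvPolynomial.algebraMap_eq]

theorem bwd_X (q : Idx L) : bwd L (MvPolynomial.X q) =
    if q.2 = 0 then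
      MvPolynomial.C (cf q.1 0)⁻¹ *
        (MvPolynomial.X (q.1, q.1.1.natDegree - 1) -
          ∑ i ∈ Finset.range (q.1.1.natDegree - 1),
            MvPolynomial.C (cf q.1 (i + 1)) * MvPolynomial.X (q.1, i))
    else MvPolynomial.X (q.1, q.2 - 1) := by
  rw [bwd, MvPolynomial.aeval_X]

theorem bwd_fwd : (bwd L).comp (fwd L) = AlgHom.id L (StepRing L) := by
  apply MvPolynomial.algHom_ext
  rintro ⟨p, j⟩
  simp only [AlgHom.comp_apply, AlgHom.id_apply, fwd, MvPolynomial.aeval_X]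
  by_cases h : j + 1 = p.1.natDegree
  · rw [if_pos h, map_sum, ← h]
    rw [Finset.sum_range_succ']
    simp only [map_mul, bwd_C, bwd_X, Nat.succ_ne_zero, if_false, if_true, ite_true,
      ite_false]
    rw [← h]
    simp only [Nat.add_sub_cancel]
    rw [← mul_assoc, ← map_mul, mul_inv_cancel₀ (cf_zero_ne p), map_one, one_mul]
    ring
  · rw [if_neg h]
    show bwd L (MvPolynomial.X (p, j + 1)) = _
    rw [bwd, MvPolynomial.aeval_X, if_neg (Nat.succ_ne_zero j)]
    simp

theorem fwd_injective : Function.Injective (fwd L) := by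
  intro x y hxy
  have := congrArg (bwd L) hxy
  rwa [← AlgHom.comp_apply, ← AlgHom.comp_apply, bwd_fwd, AlgHom.id_apply, AlgHom.id_apply] at this

/-- The σ-twisted endomorphism of the polynomial ring. -/
noncomputable def tau0 : StepRing L →+* StepRing L :=
  (fwd L).toRingHom.comp (MvPolynomial.map σ)

theorem tau0_injective : Function.Injective (tau0 L σ) :=
  (fwd_injective L).comp (MvPolynomial.map_injective σ σ.injective)

noncomputable def emb : L →+* StepField L :=
  (algebraMap (StepRing L) (StepField L)).comp (MvPolynomial.C)

noncomputable def tau : StepField L →+* StepField L :=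
  IsFractionRing.lift (g := (algebraMap (StepRing L) (StepField L)).comp (tau0 L σ))
    ((IsFractionRing.injective (StepRing L) (StepField L)).comp (tau0_injective L σ))

theorem tau_algebraMap (x : StepRing L) :
    tau L σ (algebraMap _ _ x) = algebraMap _ _ (tau0 L σ x) := by
  unfold tau
  exact IsFractionRing.lift_algebraMap _ _

theorem tau0_C (x : L) : tau0 L σ (MvPolynomial.C x) = MvPolynomial.C (σ x) := by
  show fwd L (MvPolynomial.map σ (MvPolynomial.C x)) = MvPolynomial.C (σ x)
  rw [MvPolynomial.map_C]
  simp [fwd, MvPolynomial.algebraMap_eq]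

theorem tau_emb (x : L) : tau L σ (emb L x) = emb L (σ x) := by
  unfold emb
  rw [RingHom.comp_apply, RingHom.comp_apply, tau_algebraMap, tau0_C]

theorem tau0_X (p) (j : ℕ) :
    tau0 L σ (MvPolynomial.X (p, j)) =
      if j + 1 = p.1.natDegree then
        ∑ i ∈ Finset.range p.1.natDegree, MvPolynomial.C (cf p i) * MvPolynomial.X (p, i)
      else MvPolynomial.X (p, j + 1) := by
  show fwd L (MvPolynomial.map σ (MvPolynomial.X _)) = _
  rw [MvPolynomial.map_X, fwd, MvPolynomial.aeval_X]

theorem step_root (p : {P : Polynomial L // 0 < P.natDegree ∧ P.coeff 0 ≠ 0}) :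
    ∃ a : StepField L, skewEval (tau L σ) (p.1.map (emb L)) a = 0 := by
  classical
  set n := p.1.natDegree with hn
  obtain ⟨m, hm⟩ : ∃ m, n = m + 1 := ⟨n - 1, (Nat.succ_pred_eq_of_pos p.2.1).symm⟩
  set b : StepField L := algebraMap (StepRing L) (StepField L) (MvPolynomial.X (p, 0)) with hbdef
  have hb : b ≠ 0 := by
    simp only [hbdef, ne_eq,
      map_eq_zero_iff _ (IsFractionRing.injective (StepRing L) (StepField L))]
    exact MvPolynomial.X_ne_zero _
  refine ⟨tau L σ b / b, skewEval_of_linear _ _ b hb ?_⟩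
  have hdeg : (p.1.map (emb L)).natDegree = n :=
    natDegree_map_eq_of_injective (emb L).injective _
  rw [hdeg]
  have hiter : ∀ j, j < n →
      (⇑(tau L σ))^[j] b = algebraMap (StepRing L) (StepField L) (MvPolynomial.X (p, j)) := by
    intro j
    induction j with
    | zero => intro _; rfl
    | succ j ih =>
      intro hj
      rw [Function.iterate_succ_apply', ih (by omega), tau_algebraMap, tau0_X,
        if_neg (by omega)]
  have htop : (⇑(tau L σ))^[n] b =
      ∑ i ∈ Finset.range n, emb L (cf p i) *
        algebraMap (StepRing L) (StepField L) (MvPolynomial.X (p, i)) := by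
    rw [hm, Function.iterate_succ_apply', hiter m (by omega), tau_algebraMap, tau0_X,
      if_pos (by omega), map_sum, ← hn, hm]
    refine Finset.sum_congr rfl fun i _ => ?_
    rw [map_mul]
    rfl
  rw [Finset.sum_range_succ]
  have h1 : ∀ i ∈ Finset.range n, (p.1.map (emb L)).coeff i * (⇑(tau L σ))^[i] b
      = emb L (p.1.coeff i) * algebraMap (StepRing L) (StepField L) (MvPolynomial.X (p, i)) := by
    intro i hi
    rw [coeff_map, hiter i (Finset.mem_range.mp hi)]
  rw [Finset.sum_congr rfl h1, coeff_map, htop, Finset.mul_sum, ← Finset.sum_add_distrib]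
  apply Finset.sum_eq_zero
  intro i _
  have hz : p.1.coeff i + p.1.coeff n * cf p i = 0 := by
    have hl : p.1.leadingCoeff ≠ 0 := lead_ne_zero p
    rw [cf, hn, Polynomial.coeff_natDegree]
    field_simp
    ring
  set xi := algebraMap (StepRing L) (StepField L) (MvPolynomial.X (p, i))
  have : emb L (p.1.coeff i) * xi + emb L (p.1.coeff n) * (emb L (cf p i) * xi)
      = emb L (p.1.coeff i + p.1.coeff n * cf p i) * xi := by
    rw [map_add, map_mul]; ring
  rw [this, hz, map_zero, zero_mul]

end Step

section Tower

variable (K : Type u) [Field K] (σ : K →+* K)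

/-- The tower of σ-fields obtained by iterating the step construction. -/
noncomputable def F : ℕ → SigmaField.{u}
  | 0 => ⟨K, σ⟩
  | m + 1 => ⟨StepField (F m).carrier, tau (F m).carrier (F m).sigma⟩

/-- The embedding of one stage into the next. -/
noncomputable def embF (m : ℕ) : (F K σ m).carrier →+* (F K σ (m + 1)).carrier :=
  emb (F K σ m).carrier

theorem embF_sigma (m : ℕ) (x : (F K σ m).carrier) :
    (F K σ (m + 1)).sigma (embF K σ m x) = embF K σ m ((F K σ m).sigma x) :=
  tau_emb _ _ x

/-- Transition maps of the tower. -/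
noncomputable def trans : ∀ i j : ℕ, i ≤ j → (F K σ i).carrier →+* (F K σ j).carrier :=
  fun _ j h => Nat.leRecOn h (fun {k} f => (embF K σ k).comp f) (RingHom.id _)

theorem trans_self (i : ℕ) (h : i ≤ i) (x) : trans K σ i i h x = x := by
  rw [trans, Nat.leRecOn_self]
  rfl

theorem trans_succ (i j : ℕ) (h : i ≤ j) (x) :
    trans K σ i (j + 1) (h.trans (Nat.le_succ j)) x = embF K σ j (trans K σ i j h x) := by
  rw [trans, trans, Nat.leRecOn_succ h]
  rfl

theorem trans_map_map (i j k : ℕ) (hij : i ≤ j) (hjk : j ≤ k) (x) :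
    trans K σ j k hjk (trans K σ i j hij x) = trans K σ i k (hij.trans hjk) x := by
  induction k, hjk using Nat.le_induction with
  | base => rw [trans_self]
  | succ k hjk ih =>
    rw [trans_succ K σ j k hjk, trans_succ K σ i k (hij.trans hjk), ih]

instance towerDirected :
    DirectedSystem (fun m => (F K σ m).carrier) (fun i j h => trans K σ i j h) where
  map_self := fun i x => trans_self K σ i le_rfl x
  map_map := fun {k j i} hij hjk x => trans_map_map K σ i j k hij hjk x

theorem trans_sigma (i j : ℕ) (h : i ≤ j) (x) :
    trans K σ i j h ((F K σ i).sigma x) = (F K σ j).sigma (trans K σ i j h x) := by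
  induction j, h using Nat.le_induction with
  | base => rw [trans_self, trans_self]
  | succ j hij ih =>
    rw [trans_succ K σ i j hij, trans_succ K σ i j hij, ih, embF_sigma]

/-- The limit σ-field. -/
noncomputable abbrev Lim : Type u :=
  Ring.DirectLimit (fun m => (F K σ m).carrier) (fun i j h => trans K σ i j h)

noncomputable instance : Field (Lim K σ) :=
  Field.DirectLimit.field _ (fun i j h => trans K σ i j h)

/-- Canonical maps to the limit. -/
noncomputable def ofF (m : ℕ) : (F K σ m).carrier →+* Lim K σ :=
  Ring.DirectLimit.of (fun m => (F K σ m).carrier) (fun i j h => trans K σ i j h) m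

theorem ofF_trans (i j : ℕ) (h : i ≤ j) (x) : ofF K σ j (trans K σ i j h x) = ofF K σ i x :=
  Ring.DirectLimit.of_f (G := fun m => (F K σ m).carrier) (f := fun i j h => trans K σ i j h) h x

/-- The endomorphism of the limit. -/
noncomputable def sigmaLim : Lim K σ →+* Lim K σ :=
  Ring.DirectLimit.lift (fun m => (F K σ m).carrier) (fun i j h => trans K σ i j h) (Lim K σ)
    (fun m => (ofF K σ m).comp (F K σ m).sigma)
    (fun i j hij x => by
      simp only [RingHom.comp_apply]
      rw [← trans_sigma K σ i j hij, ofF_trans])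

theorem sigmaLim_ofF (m : ℕ) (x) : sigmaLim K σ (ofF K σ m x) = ofF K σ m ((F K σ m).sigma x) := by
  unfold sigmaLim ofF
  exact Ring.DirectLimit.lift_of (G := fun m => (F K σ m).carrier)
    (f := fun i j h => ⇑(trans K σ i j h)) (P := Lim K σ)
    (fun m => (Ring.DirectLimit.of (fun m => (F K σ m).carrier)
      (fun i j h => ⇑(trans K σ i j h)) m).comp (F K σ m).sigma) _ m x

theorem ofF_emb (m : ℕ) (x : (F K σ m).carrier) :
    ofF K σ (m + 1) (embF K σ m x) = ofF K σ m x := by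
  have h1 : embF K σ m x = trans K σ m (m + 1) (Nat.le_succ m) x := by
    have := trans_succ K σ m m le_rfl x
    rw [trans_self] at this
    exact this.symm
  rw [h1, ofF_trans]

end Tower
end SkewAux


/-- Every σ-field embeds as a σ-subfield into a 1-algebraically closed σ-field, i.e. one in
which every nonconstant skew polynomial has a right root. -/
theorem stmt_12 (K : Type u) [Field K] (σ : K →+* K) :
    ∃ (L : SigmaField.{u}) (ι : K →+* L.carrier),
      (∀ x : K, L.sigma (ι x) = ι (σ x)) ∧
      (∀ P : Polynomial L.carrier, 0 < P.natDegree →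
        ∃ a : L.carrier, skewEval L.sigma P a = 0) := by
  classical
  refine ⟨⟨SkewAux.Lim K σ, SkewAux.sigmaLim K σ⟩, SkewAux.ofF K σ 0, fun x =>
    SkewAux.sigmaLim_ofF K σ 0 x, fun P hP => ?_⟩
  by_cases hc : P.coeff 0 = 0
  · exact ⟨0, by rw [SkewAux.skewEval_zero, hc]⟩
  · obtain ⟨m, Q, hQ⟩ := Ring.DirectLimit.Polynomial.exists_of
      (f' := fun i j h => SkewAux.trans K σ i j h) P
    have hinj : Function.Injective (SkewAux.ofF K σ m) := (SkewAux.ofF K σ m).injective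
    have hQ' : Q.map (SkewAux.ofF K σ m) = P := hQ
    have hdeg : Q.natDegree = P.natDegree := by
      rw [← hQ', natDegree_map_eq_of_injective hinj]
    have hQ0 : 0 < Q.natDegree := hdeg ▸ hP
    have hc0 : Q.coeff 0 ≠ 0 := fun h => hc (by rw [← hQ', coeff_map, h, map_zero])
    obtain ⟨a, ha⟩ := SkewAux.step_root _ (SkewAux.F K σ m).sigma ⟨Q, hQ0, hc0⟩
    refine ⟨SkewAux.ofF K σ (m + 1) a, ?_⟩
    have hcomm : ∀ x, SkewAux.ofF K σ (m + 1) ((SkewAux.F K σ (m + 1)).sigma x)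
        = SkewAux.sigmaLim K σ (SkewAux.ofF K σ (m + 1) x) := fun x =>
      (SkewAux.sigmaLim_ofF K σ (m + 1) x).symm
    have hkey := SkewAux.skewEval_map ((SkewAux.F K σ (m + 1)).sigma) (SkewAux.sigmaLim K σ)
      (SkewAux.ofF K σ (m + 1)) hcomm (Q.map (SkewAux.emb (SkewAux.F K σ m).carrier)) a
    have ha' : skewEval ((SkewAux.F K σ (m + 1)).sigma)
        (Q.map (SkewAux.emb (SkewAux.F K σ m).carrier)) a = 0 := ha
    rw [ha', map_zero] at hkey
    have hcomp : (Q.map (SkewAux.emb (SkewAux.F K σ m).carrier)).map (SkewAux.ofF K σ (m + 1))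
        = P := by
      rw [← hQ']
      ext i
      erw [coeff_map, coeff_map]
      simp only [coeff_map]
      exact SkewAux.ofF_emb K σ m _
    rw [← hcomp]
    exact hkey
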